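/- Let L be a Lie algebra over ℤ_p that is free of finite rank d as a ℤ_p-module, and suppose the ℚ_p-Lie algebra ℚ_p ⊗_{ℤ_p} L has minimal number of generators equal to d. Then either L is abelian, or L = ℤ_p·x ⊕ A where A ≅ ℤ_p^{d-1} is an abelian ideal of L and ad(x) acts on A as multiplication by p^s for some nonnegative integer s. -/

import Mathlib

open scoped TensorProduct

open Module Submodule

lemma scalar_of_mem_span {K V : Type*} [Field K] [AddCommGroup V] [Module K V]
    (T : V →ₗ[K] V) (h : ∀ v : V, T v ∈ span K {v}) : ∃ c : K, ∀ v, T v = c • v := by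
  by_cases hV : ∀ v : V, v = 0
  · exact ⟨0, fun v => by rw [hV v]; simp⟩
  push_neg at hV
  obtain ⟨x, hx⟩ := hV
  obtain ⟨c, hc⟩ := mem_span_singleton.mp (h x)
  replace hc : T x = c • x := hc.symm
  refine ⟨c, fun y => ?_⟩
  rcases eq_or_ne y 0 with rfl | hy
  · simp
  obtain ⟨cy, hcy⟩ := mem_span_singleton.mp (h y)
  replace hcy : T y = cy • y := hcy.symm
  by_cases hsp : y ∈ span K {x}
  · obtain ⟨t, rfl⟩ := mem_span_singleton.mp hsp
    rw [map_smul, hc, smul_comm]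
  · obtain ⟨e, he⟩ := mem_span_singleton.mp (h (x + y))
    replace he : T x + T y = e • x + e • y := by rw [← smul_add, he, map_add]
    rw [hc, hcy] at he
    have key : (e - c) • x = (cy - e) • y := by
      rw [sub_smul, sub_smul, sub_eq_sub_iff_add_eq_add]
      rw [← he]; abel
    have hec : e = c := by
      by_contra hne
      apply hsp
      have hxy : x = ((e - c)⁻¹ * (cy - e)) • y := by
        rw [mul_smul, ← key, smul_smul, inv_mul_cancel₀ (sub_ne_zero.mpr hne), one_smul]
      rcases eq_or_ne (cy - e) 0 with h0 | h0
      · exact absurd (by rw [hxy, h0]; simp) hx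
      · rw [mem_span_singleton]
        refine ⟨(cy - e)⁻¹ * (e - c), ?_⟩
        rw [hxy, smul_smul]
        field_simp
        rw [one_smul]
    rw [hec, sub_self, zero_smul] at key
    have : (cy - c) • y = 0 := key.symm
    rcases smul_eq_zero.mp this with h0 | h0
    · rw [hcy, sub_eq_zero.mp h0]
    · exact absurd h0 hy

lemma pair_indep {K V : Type*} [Field K] [AddCommGroup V] [Module K V] {u v : V}
    (hu : u ≠ 0) (hv : v ∉ span K {u}) : LinearIndependent K ![u, v] := by
  rw [LinearIndependent.pair_iff]
  intro s t hst
  rcases eq_or_ne t 0 with rfl | ht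
  · rw [zero_smul, add_zero] at hst
    rcases smul_eq_zero.mp hst with h | h
    exacts [⟨h, rfl⟩, absurd h hu]
  · exfalso
    apply hv
    refine Submodule.mem_span_singleton.mpr ⟨-(t⁻¹ * s), ?_⟩
    have h1 : t • v = -(s • u) := by rwa [eq_neg_iff_add_eq_zero, add_comm]
    have h2 := congrArg (fun z => t⁻¹ • z) h1
    simp only [smul_smul, inv_mul_cancel₀ ht, one_smul, smul_neg] at h2
    rw [neg_smul]
    exact h2.symm

lemma exists_linear_form {K V : Type*} [Field K] [LieRing V] [LieAlgebra K V]
    [FiniteDimensional K V]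
    (H : ∀ u v : V, ⁅u, v⁆ ∈ span K {u, v}) (hn : ∃ u v : V, ⁅u, v⁆ ≠ 0) :
    ∃ F : V →ₗ[K] K, ∀ u v : V, ⁅u, v⁆ = F u • v - F v • u := by
  obtain ⟨u0, v0, hbr⟩ := hn
  have hu0 : u0 ≠ 0 := fun h => hbr (by rw [h, zero_lie])
  -- dimension at least 2
  have hpair0 : LinearIndependent K ![u0, v0] := by
    refine pair_indep hu0 (fun hsp => ?_)
    obtain ⟨t, rfl⟩ := mem_span_singleton.mp hsp
    exact hbr (by rw [lie_smul, lie_self, smul_zero])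
  have h2 : 2 ≤ finrank K V := by
    simpa using hpair0.fintype_card_le_finrank
  have hVne : ∃ v : V, v ≠ 0 := ⟨u0, hu0⟩
  -- existence of the scalar for each nonzero u
  have P1 : ∀ u : V, u ≠ 0 → ∃ c : K, ∀ v : V, ⁅u, v⁆ - c • v ∈ span K {u} := by
    intro u hu
    set p : Submodule K V := span K {u} with hp
    have hle : p ≤ p.comap (LieAlgebra.ad K V u : V →ₗ[K] V) := by
      intro z hz
      obtain ⟨t, rfl⟩ := mem_span_singleton.mp hz
      simp only [Submodule.mem_comap, LieAlgebra.ad_apply, lie_smul, lie_self, smul_zero]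
      exact p.zero_mem
    set T : (V ⧸ p) →ₗ[K] (V ⧸ p) := p.mapQ p (LieAlgebra.ad K V u : V →ₗ[K] V) hle with hT
    have hTspan : ∀ w : V ⧸ p, T w ∈ span K {w} := by
      intro w
      obtain ⟨v, rfl⟩ := Submodule.Quotient.mk_surjective p w
      rw [hT, Submodule.mapQ_apply, LieAlgebra.ad_apply]
      obtain ⟨a, b, hab⟩ := Submodule.mem_span_pair.mp (H u v)
      rw [← hab]
      have : (Submodule.Quotient.mk (a • u + b • v) : V ⧸ p)
          = b • (Submodule.Quotient.mk v) := by
        have hmku : (Submodule.Quotient.mk u : V ⧸ p) = 0 :=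
          (Submodule.Quotient.mk_eq_zero p).mpr (mem_span_singleton_self u)
        rw [Submodule.Quotient.mk_add, Submodule.Quotient.mk_smul,
          Submodule.Quotient.mk_smul, hmku, smul_zero, zero_add]
      rw [this]
      exact mem_span_singleton.mpr ⟨b, rfl⟩
    obtain ⟨c, hc⟩ := scalar_of_mem_span T hTspan
    refine ⟨c, fun v => ?_⟩
    have := hc (Submodule.Quotient.mk v)
    rw [hT, Submodule.mapQ_apply, LieAlgebra.ad_apply] at this
    rw [← Submodule.Quotient.mk_eq_zero, Submodule.Quotient.mk_sub,
      Submodule.Quotient.mk_smul, this, sub_self]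
  -- uniqueness of the scalar
  have Puniq : ∀ (u : V), u ≠ 0 → ∀ c c' : K, (∀ v : V, ⁅u, v⁆ - c • v ∈ span K {u}) →
      (∀ v : V, ⁅u, v⁆ - c' • v ∈ span K {u}) → c = c' := by
    intro u hu c c' hc hc'
    have hne : span K {u} ≠ ⊤ := by
      intro htop
      have h1 : finrank K (span K {u} : Submodule K V) = 1 := finrank_span_singleton hu
      rw [htop, finrank_top] at h1
      omega
    obtain ⟨v, hv⟩ : ∃ v : V, v ∉ span K {u} := by
      by_contra hall
      push_neg at hall
      exact hne (Submodule.eq_top_iff'.mpr hall)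
    by_contra hcc
    apply hv
    have hmem : (c' - c) • v ∈ span K {u} := by
      have := Submodule.sub_mem _ (hc v) (hc' v)
      simpa [sub_sub_sub_cancel_left, sub_smul] using this
    obtain ⟨t, ht⟩ := mem_span_singleton.mp hmem
    refine mem_span_singleton.mpr ⟨(c' - c)⁻¹ * t, ?_⟩
    rw [mul_smul, ht, smul_smul, inv_mul_cancel₀ (sub_ne_zero.mpr (Ne.symm hcc)), one_smul]
  classical
  -- the function f
  set f : V → K := fun u => if hu : u = 0 then 0 else (P1 u hu).choose with hf
  have hf0 : f 0 = 0 := by rw [hf]; simp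
  have hfspec : ∀ (u : V) (hu : u ≠ 0) (v : V), ⁅u, v⁆ - f u • v ∈ span K {u} := by
    intro u hu v
    rw [hf]
    simp only [dif_neg hu]
    exact (P1 u hu).choose_spec v
  -- homogeneity
  have hfsmul : ∀ (t : K) (u : V), f (t • u) = t * f u := by
    intro t u
    rcases eq_or_ne t 0 with rfl | ht
    · rw [zero_smul, hf0, zero_mul]
    rcases eq_or_ne u 0 with rfl | hu
    · rw [smul_zero, hf0, mul_zero]
    have htu : t • u ≠ 0 := smul_ne_zero ht hu
    refine Puniq (t • u) htu _ _ (hfspec _ htu) (fun v => ?_)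
    have hspan : span K {t • u} = span K {u} :=
      Submodule.span_singleton_smul_eq (IsUnit.mk0 t ht) u
    rw [hspan, smul_lie, mul_smul, ← smul_sub]
    exact Submodule.smul_mem _ t (hfspec u hu v)
  -- the main identity
  have hmain : ∀ u v : V, ⁅u, v⁆ = f u • v - f v • u := by
    intro u v
    rcases eq_or_ne u 0 with rfl | hu
    · rw [zero_lie, hf0, zero_smul, smul_zero, sub_zero]
    by_cases hv : v ∈ span K {u}
    · obtain ⟨t, rfl⟩ := mem_span_singleton.mp hv
      rw [lie_smul, lie_self, smul_zero, hfsmul, smul_smul, mul_comm (f u) t, sub_self]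
    · have hvne : v ≠ 0 := fun h => hv (h ▸ Submodule.zero_mem _)
      have hpair : LinearIndependent K ![u, v] := pair_indep hu hv
      obtain ⟨a, ha⟩ := mem_span_singleton.mp (hfspec u hu v)
      obtain ⟨b, hb⟩ := mem_span_singleton.mp (hfspec v hvne u)
      have h1 : ⁅u, v⁆ = a • u + f u • v := sub_eq_iff_eq_add.mp ha.symm
      have h2' : ⁅u, v⁆ = -(b • v + f v • u) := by
        rw [← lie_skew u v, neg_inj]
        exact sub_eq_iff_eq_add.mp hb.symm
      have h4 : a • u + f u • v = -(b • v + f v • u) := h1.symm.trans h2'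
      have h5 : a • u + f u • v + (b • v + f v • u) = 0 := by rw [h4]; abel
      have hzero : (a + f v) • u + (f u + b) • v = 0 := by
        rw [add_smul, add_smul, ← h5]; abel
      have hco := LinearIndependent.pair_iff.mp hpair _ _ hzero
      have ha' : a = -f v := eq_neg_of_add_eq_zero_left hco.1
      rw [h1, ha', neg_smul]
      abel
  -- additivity
  have hfadd : ∀ u w : V, f (u + w) = f u + f w := by
    intro u w
    obtain ⟨v, hvne⟩ := hVne
    have h1 := hmain (u + w) v
    have h2' := hmain u v
    have h3 := hmain w v
    have hsum : ⁅u + w, v⁆ = ⁅u, v⁆ + ⁅w, v⁆ := add_lie u w v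
    rw [h1, h2', h3] at hsum
    have hz : (f (u + w) - (f u + f w)) • v = 0 := by
      rw [sub_smul, add_smul]
      rw [smul_add] at hsum
      rw [sub_eq_iff_eq_add] at hsum
      rw [hsum]; abel
    rcases smul_eq_zero.mp hz with h | h
    · exact sub_eq_zero.mp h
    · exact absurd h hvne
  exact ⟨{ toFun := f, map_add' := hfadd, map_smul' := fun t u => hfsmul t u }, hmain⟩

/-- The minimal number of generators of a Lie algebra `L` over `R`. -/
noncomputable def lieD (R L : Type*) [CommRing R] [LieRing L] [LieAlgebra R L] : ℕ :=
  sInf {n | ∃ s : Finset L, s.card = n ∧ LieSubalgebra.lieSpan R L ↑s = ⊤}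

lemma bracket_mem_span {K V : Type*} [Field K] [LieRing V] [LieAlgebra K V]
    [FiniteDimensional K V] (h : lieD K V = finrank K V) :
    ∀ u v : V, ⁅u, v⁆ ∈ span K {u, v} := by
  classical
  by_contra hc
  push_neg at hc
  obtain ⟨u, v, hw⟩ := hc
  obtain ⟨w, hwdef⟩ : ∃ w, ⁅u, v⁆ = w := ⟨_, rfl⟩
  rw [hwdef] at hw
  have hune : u ≠ 0 := by
    rintro rfl
    exact hw (by rw [← hwdef, zero_lie]; exact Submodule.zero_mem _)
  have hvnu : v ∉ span K ({u} : Set V) := by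
    intro hsp
    obtain ⟨t, rfl⟩ := mem_span_singleton.mp hsp
    exact hw (by rw [← hwdef, lie_smul, lie_self, smul_zero]; exact Submodule.zero_mem _)
  have hvne : v ≠ 0 := fun h0 => hvnu (h0 ▸ Submodule.zero_mem _)
  have hunv : u ∉ span K ({v} : Set V) := by
    intro hsp
    obtain ⟨t, ht⟩ := mem_span_singleton.mp hsp
    have htne : t ≠ 0 := by rintro rfl; rw [zero_smul] at ht; exact hune ht.symm
    exact hvnu (mem_span_singleton.mpr ⟨t⁻¹, by rw [← ht, smul_smul, inv_mul_cancel₀ htne, one_smul]⟩)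
  -- linear independence of {w, u, v}
  have hind1 : LinearIndepOn K id ({v} : Set V) :=
    (linearIndepOn_singleton_iff K).mpr hvne
  have hind2 : LinearIndepOn K id (insert u {v} : Set V) :=
    hind1.id_insert hunv
  have huv : (insert u {v} : Set V) = {u, v} := rfl
  have hwspan : w ∉ span K (insert u {v} : Set V) := by rw [huv]; exact hw
  have hind3 : LinearIndepOn K id (insert w (insert u {v}) : Set V) :=
    hind2.id_insert hwspan
  -- extend to a basis
  have hind3' : LinearIndepOn K id (insert w (insert u {v}) : Set V) := hind3
  set tset := hind3'.extend (Set.subset_univ _) with htset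
  have hsub3 : (insert w (insert u {v}) : Set V) ⊆ tset := hind3'.subset_extend _
  set B : Basis tset K V := Basis.extend hind3' with hB
  haveI : Fintype tset := FiniteDimensional.fintypeBasisIndex B
  have hcard : finrank K V = tset.toFinset.card := by
    rw [finrank_eq_card_basis B, Set.toFinset_card]
  have hwt : w ∈ tset := hsub3 (Set.mem_insert _ _)
  have hut : u ∈ tset := hsub3 (Set.mem_insert_of_mem _ (Set.mem_insert _ _))
  have hvt : v ∈ tset := hsub3 (Set.mem_insert_of_mem _ (Set.mem_insert_of_mem _ rfl))
  have huw : u ≠ w := by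
    rintro rfl
    exact hw (Submodule.subset_span (Set.mem_insert _ _))
  have hvw : v ≠ w := by
    rintro rfl
    exact hw (Submodule.subset_span (Set.mem_insert_of_mem _ rfl))
  set T : Finset V := tset.toFinset with hT
  have hwT : w ∈ T := Set.mem_toFinset.mpr hwt
  -- the Lie span of T.erase w is everything
  have hspan : LieSubalgebra.lieSpan K V ↑(T.erase w) = ⊤ := by
    have hmemu : u ∈ LieSubalgebra.lieSpan K V ↑(T.erase w) :=
      LieSubalgebra.subset_lieSpan (by
        simp only [Finset.coe_erase, Set.mem_diff, Set.mem_singleton_iff]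
        exact ⟨Set.mem_toFinset.mpr hut, huw⟩)
    have hmemv : v ∈ LieSubalgebra.lieSpan K V ↑(T.erase w) :=
      LieSubalgebra.subset_lieSpan (by
        simp only [Finset.coe_erase, Set.mem_diff, Set.mem_singleton_iff]
        exact ⟨Set.mem_toFinset.mpr hvt, hvw⟩)
    have hmemw : w ∈ LieSubalgebra.lieSpan K V ↑(T.erase w) := by
      have := (LieSubalgebra.lieSpan K V ↑(T.erase w)).lie_mem hmemu hmemv
      rwa [hwdef] at this
    have htsub : tset ⊆ ↑(LieSubalgebra.lieSpan K V ↑(T.erase w) : LieSubalgebra K V) := by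
      intro x hx
      by_cases hxw : x = w
      · rw [hxw]; exact hmemw
      · exact LieSubalgebra.subset_lieSpan (by
          simp only [Finset.coe_erase, Set.mem_diff, Set.mem_singleton_iff]
          exact ⟨Set.mem_toFinset.mpr hx, hxw⟩)
    rw [eq_top_iff]
    intro x _
    have hxspan : x ∈ span K tset := by
      have h1 : Set.range (B : tset → V) ⊆ tset := by
        rintro y ⟨i, rfl⟩
        rw [hB, Basis.extend_apply_self]
        exact i.2
      have h2 : (⊤ : Submodule K V) ≤ span K tset := by
        rw [← B.span_eq]
        exact Submodule.span_mono h1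
      exact h2 trivial
    exact Submodule.span_le.mpr htsub hxspan
  -- contradiction with minimality
  have hmem : (finrank K V - 1) ∈ {n | ∃ s : Finset V, s.card = n ∧ LieSubalgebra.lieSpan K V ↑s = ⊤} := by
    refine ⟨T.erase w, ?_, hspan⟩
    rw [Finset.card_erase_of_mem hwT, ← hcard]
  have hle := Nat.sInf_le hmem
  rw [show sInf {n | ∃ s : Finset V, s.card = n ∧ LieSubalgebra.lieSpan K V ↑s = ⊤} = lieD K V from rfl, h] at hle
  have hpos : 0 < finrank K V := by
    have : Fintype.card (Fin 1) ≤ finrank K V :=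
      ((linearIndependent_unique_iff (v := ![u])).mpr (by simpa using hune)).fintype_card_le_finrank
    simp at this; omega
  omega

set_option maxHeartbeats 1000000

/-- Let `L` be a `ℤₚ`-Lie lattice of rank `d` such that the `ℚₚ`-Lie algebra
`ℚₚ ⊗ L` has minimal number of generators `d`.  Then either `L` is abelian, or
`L = ℤₚ·x ⊕ A` with `A ≅ ℤₚ^{d-1}` an abelian ideal and `ad x` acting on `A` as
multiplication by `p^s` for some `s ∈ ℕ`. -/
theorem stmt_4 (p : ℕ) [Fact p.Prime] (L : Type*) [LieRing L] [LieAlgebra ℤ_[p] L]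
    [Module.Free ℤ_[p] L] [Module.Finite ℤ_[p] L] (d : ℕ)
    (hd : Module.finrank ℤ_[p] L = d)
    (h : lieD ℚ_[p] (ℚ_[p] ⊗[ℤ_[p]] L) = d) :
    IsLieAbelian L ∨
      ∃ (x : L) (A : LieIdeal ℤ_[p] L) (s : ℕ), IsLieAbelian A ∧
        Module.Free ℤ_[p] A ∧ Module.finrank ℤ_[p] A = d - 1 ∧
        Submodule.span ℤ_[p] {x} ⊓ A.toSubmodule = ⊥ ∧
        Submodule.span ℤ_[p] {x} ⊔ A.toSubmodule = ⊤ ∧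
        ∀ a ∈ A, ⁅x, a⁆ = (p : ℤ_[p]) ^ s • a := by
  classical
  by_cases hab : ∀ u v : L, ⁅u, v⁆ = 0
  · exact Or.inl ⟨hab⟩
  push_neg at hab
  obtain ⟨u0, v0, hbr⟩ := hab
  set M := ℚ_[p] ⊗[ℤ_[p]] L with hM
  set b := Module.Free.chooseBasis ℤ_[p] L with hb
  set ι := Module.Free.ChooseBasisIndex ℤ_[p] L
  set bb : Basis ι ℚ_[p] M := b.baseChange ℚ_[p] with hbb
  set j : L →ₗ[ℤ_[p]] M := TensorProduct.mk ℤ_[p] ℚ_[p] L 1 with hj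
  have hjx : ∀ x : L, j x = (1 : ℚ_[p]) ⊗ₜ[ℤ_[p]] x := fun x => rfl
  -- coordinates of j x
  have K1 : ∀ (x : L) (i : ι), bb.repr (j x) i = ((b.repr x i : ℚ_[p])) := by
    intro x i
    have hx : j x = ∑ k, ((b.repr x k : ℚ_[p])) • bb k := by
      conv_lhs => rw [← b.sum_repr x]
      rw [map_sum]
      refine Finset.sum_congr rfl fun k _ => ?_
      rw [map_smul, ← algebraMap_smul ℚ_[p] (b.repr x k) (j (b k))]
      congr 1
      rw [hjx, Basis.baseChange_apply]
    rw [hx]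
    have := bb.repr_sum_self (fun k => ((b.repr x k : ℚ_[p])))
    exact congrFun this i
  have hjinj : Function.Injective j := by
    intro x y hxy
    refine b.ext_elem fun i => ?_
    have h1 := K1 x i
    have h2 := K1 y i
    rw [hxy, h2] at h1
    exact Subtype.coe_injective h1.symm
  have jbr : ∀ x y : L, j ⁅x, y⁆ = ⁅j x, j y⁆ := by
    intro x y
    rw [hjx, hjx, hjx, LieAlgebra.ExtendScalars.bracket_tmul, one_mul]
  -- membership criterion for the lattice
  have K2 : ∀ m : M, (∀ i, ‖bb.repr m i‖ ≤ 1) → ∃ x : L, j x = m := by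
    intro m hm
    set z : ι → ℤ_[p] := fun i => ⟨bb.repr m i, hm i⟩ with hz
    refine ⟨∑ i, z i • b i, bb.ext_elem fun i => ?_⟩
    rw [K1, congrFun (b.repr_sum_self z) i]
  have K2' : ∀ (x : L) (i : ι), ‖bb.repr (j x) i‖ ≤ 1 := by
    intro x i
    rw [K1]
    exact (b.repr x i).2
  -- dimensions
  haveI : FiniteDimensional ℚ_[p] M := Module.Finite.of_basis bb
  have hcard : Fintype.card ι = d := by
    rw [← hd, Module.finrank_eq_card_chooseBasisIndex]
  have hdim : finrank ℚ_[p] M = d := by rw [finrank_eq_card_basis bb, hcard]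
  -- every bracket lies in the span of its two arguments
  have H : ∀ u v : M, ⁅u, v⁆ ∈ span ℚ_[p] {u, v} :=
    bracket_mem_span (by rw [hdim, h])
  -- nonabelian in M
  have hnM : ⁅j u0, j v0⁆ ≠ 0 := by
    rw [← jbr]
    intro h0
    exact hbr (hjinj (by rw [h0, map_zero]))
  obtain ⟨F, hF⟩ := exists_linear_form H ⟨j u0, j v0, hnM⟩
  -- bracket identity in L
  have brL : ∀ x y : L, j ⁅x, y⁆ = F (j x) • j y - F (j y) • j x := by
    intro x y; rw [jbr, hF]
  -- F kills the image of any bracket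
  have hFbr : ∀ u v : M, F ⁅u, v⁆ = 0 := by
    intro u v
    rw [hF, map_sub, map_smul, map_smul, smul_eq_mul, smul_eq_mul, mul_comm, sub_self]
  -- d ≥ 2
  have hd2 : 2 ≤ d := by
    have hju0 : j u0 ≠ 0 := by
      intro h0; apply hnM; rw [h0, zero_lie]
    have hjv0 : j v0 ∉ span ℚ_[p] {j u0} := by
      intro hsp
      obtain ⟨t, ht⟩ := mem_span_singleton.mp hsp
      apply hnM; rw [← ht, lie_smul, lie_self, smul_zero]
    have := (pair_indep hju0 hjv0).fintype_card_le_finrank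
    simpa [hdim] using this
  -- a nonzero lattice element killed by F
  obtain ⟨a, hane, hFa⟩ : ∃ a : L, a ≠ 0 ∧ F (j a) = 0 := by
    have hker : (LinearMap.ker F) ≠ ⊥ := by
      intro hbot
      have h1 := LinearMap.finrank_range_add_finrank_ker F
      rw [hbot, finrank_bot, add_zero, hdim] at h1
      have h2 : finrank ℚ_[p] (LinearMap.range F) ≤ finrank ℚ_[p] ℚ_[p] :=
        Submodule.finrank_le _
      rw [finrank_self] at h2
      omega
    obtain ⟨w, hwker, hwne⟩ := (Submodule.ne_bot_iff _).mp hker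
    -- scale w into the lattice
    obtain ⟨k, hk⟩ : ∃ k : ℕ, ∀ i, ‖bb.repr (((p : ℚ_[p]) ^ k) • w) i‖ ≤ 1 := by
      have hp1 : (1 : ℝ) < (p : ℝ) := by
        exact_mod_cast (Fact.out : p.Prime).one_lt
      have hex : ∀ i : ι, ∃ k : ℕ, ‖bb.repr w i‖ ≤ (p : ℝ) ^ k := by
        intro i
        obtain ⟨k, hk⟩ := pow_unbounded_of_one_lt (‖bb.repr w i‖) hp1
        exact ⟨k, hk.le⟩
      choose ks hks using hex
      refine ⟨Finset.univ.sup ks, fun i => ?_⟩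
      rw [map_smul, Finsupp.smul_apply, smul_eq_mul, norm_mul, norm_pow,
        Padic.norm_p]
      have hk1 : ((p : ℝ))⁻¹ ^ (Finset.univ.sup ks) ≤ ((p : ℝ))⁻¹ ^ (ks i) := by
        apply pow_le_pow_of_le_one (by positivity) (by
          rw [inv_le_one_iff₀]; right; linarith)
        exact Finset.le_sup (Finset.mem_univ i)
      calc ((p : ℝ))⁻¹ ^ (Finset.univ.sup ks) * ‖bb.repr w i‖
          ≤ ((p : ℝ))⁻¹ ^ (ks i) * ‖bb.repr w i‖ :=
            mul_le_mul_of_nonneg_right hk1 (norm_nonneg _)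
        _ ≤ 1 := by
            rw [inv_pow, inv_mul_le_iff₀ (by positivity), mul_one]
            exact hks i
    obtain ⟨a, ha⟩ := K2 _ hk
    have hpk : ((p : ℚ_[p]) ^ k) ≠ 0 := by
      apply pow_ne_zero
      exact_mod_cast (Fact.out : p.Prime).ne_zero
    refine ⟨a, ?_, ?_⟩
    · intro h0
      rw [h0, map_zero] at ha
      exact hwne (by simpa [smul_eq_zero, hpk] using ha.symm)
    · rw [ha, map_smul, smul_eq_mul, LinearMap.mem_ker.mp hwker, mul_zero]
  -- boundedness of F on the lattice
  have hbound : ∀ x : L, ‖F (j x)‖ ≤ 1 := by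
    intro x
    set c := F (j x) with hc
    have hiter : ∀ n : ℕ, ∃ y : L, j y = c ^ n • j a ∧ F (j y) = 0 := by
      intro n
      induction n with
      | zero => exact ⟨a, by simp, hFa⟩
      | succ n ih =>
        obtain ⟨y, hy1, hy2⟩ := ih
        refine ⟨⁅x, y⁆, ?_, ?_⟩
        · rw [brL, hy2, zero_smul, sub_zero, hy1, smul_smul, ← hc, ← pow_succ']
        · rw [brL, hy2, zero_smul, sub_zero, hy1, map_smul, map_smul, smul_eq_mul,
            smul_eq_mul, hFa, mul_zero, mul_zero]
    obtain ⟨i0, hi0⟩ : ∃ i0, b.repr a i0 ≠ 0 := by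
      by_contra hno
      push_neg at hno
      exact hane (b.ext_elem fun i => by rw [hno i, map_zero, Finsupp.zero_apply])
    have hq0 : (0 : ℝ) < ‖((b.repr a i0 : ℚ_[p]))‖ := by
      rw [norm_pos_iff]
      exact fun hh => hi0 (Subtype.coe_injective hh)
    have hnorms : ∀ n : ℕ, ‖c‖ ^ n * ‖((b.repr a i0 : ℚ_[p]))‖ ≤ 1 := by
      intro n
      obtain ⟨y, hy1, _⟩ := hiter n
      have hcoord : bb.repr (j y) i0 = c ^ n * ((b.repr a i0 : ℚ_[p])) := by
        rw [hy1, map_smul, Finsupp.smul_apply, smul_eq_mul, K1]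
      have h2 := K2' y i0
      rwa [hcoord, norm_mul, norm_pow] at h2
    by_contra hgt
    push_neg at hgt
    obtain ⟨n, hn⟩ := pow_unbounded_of_one_lt (‖((b.repr a i0 : ℚ_[p]))‖⁻¹) hgt
    have := hnorms n
    rw [← le_div_iff₀ hq0, div_eq_mul_inv, one_mul] at this
    exact absurd this (not_le.mpr hn)
  -- the ℤ_p-linear functional g on L
  set g : L →ₗ[ℤ_[p]] ℤ_[p] :=
    { toFun := fun x => ⟨F (j x), hbound x⟩
      map_add' := fun x y => Subtype.ext (by
        push_cast
        rw [map_add, map_add]; rfl)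
      map_smul' := fun c x => Subtype.ext (by
        push_cast
        rw [map_smul, ← algebraMap_smul ℚ_[p] c (j x), map_smul]
        rfl) } with hg
  have hgcoe : ∀ x : L, (g x : ℚ_[p]) = F (j x) := fun x => rfl
  have hgzero : ∀ x : L, g x = 0 ↔ F (j x) = 0 := by
    intro x
    constructor
    · intro h0
      rw [← hgcoe, h0]; rfl
    · intro h0
      exact Subtype.ext (by rw [hgcoe, h0]; rfl)
  -- g is nonzero
  obtain ⟨y0, hy0⟩ : ∃ y0 : L, g y0 ≠ 0 := by
    by_contra hno
    push_neg at hno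
    apply hnM
    rw [hF, (hgzero u0).mp (hno u0), (hgzero v0).mp (hno v0), zero_smul, zero_smul,
      sub_zero]
  -- range of g is principal
  obtain ⟨c0, hc0⟩ := (IsPrincipalIdealRing.principal (LinearMap.range g) : (LinearMap.range g).IsPrincipal)
  have hc0ne : c0 ≠ 0 := by
    rintro rfl
    rw [Submodule.span_zero_singleton] at hc0
    apply hy0
    have h2 : g y0 ∈ LinearMap.range g := LinearMap.mem_range_self g y0
    rw [hc0] at h2
    exact (Submodule.mem_bot _).mp h2
  set s := c0.valuation with hs
  set u := PadicInt.unitCoeff hc0ne with hu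
  have hc0spec : c0 = (u : ℤ_[p]) * (p : ℤ_[p]) ^ s := PadicInt.unitCoeff_spec hc0ne
  obtain ⟨x1, hx1⟩ : ∃ x1 : L, g x1 = c0 := by
    have : c0 ∈ LinearMap.range g := by
      rw [hc0]
      exact Submodule.mem_span_singleton_self c0
    exact this
  set x : L := ((u⁻¹ : ℤ_[p]ˣ) : ℤ_[p]) • x1 with hx
  have hgx : g x = (p : ℤ_[p]) ^ s := by
    rw [hx, map_smul, hx1, smul_eq_mul, hc0spec, ← mul_assoc, Units.inv_mul, one_mul]
  have hps : ((p : ℤ_[p]) ^ s) ≠ 0 := by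
    apply pow_ne_zero
    exact_mod_cast (Fact.out : p.Prime).ne_zero
  have hxne : x ≠ 0 := by
    intro h0
    rw [h0, map_zero] at hgx
    exact hps hgx.symm
  have hrange : LinearMap.range g = Submodule.span ℤ_[p] {(p : ℤ_[p]) ^ s} := by
    rw [hc0]
    have : c0 = (u : ℤ_[p]) • ((p : ℤ_[p]) ^ s) := by rw [smul_eq_mul]; exact hc0spec
    rw [this]
    exact Submodule.span_singleton_smul_eq u.isUnit _
  -- the ideal A
  set A : LieIdeal ℤ_[p] L :=
    { LinearMap.ker g with
      lie_mem := by
        intro y m _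
        show ⁅y, m⁆ ∈ LinearMap.ker g
        rw [LinearMap.mem_ker, hgzero, jbr, hFbr] } with hA
  have hAmem : ∀ z : L, z ∈ A ↔ F (j z) = 0 := by
    intro z
    show z ∈ LinearMap.ker g ↔ _
    rw [LinearMap.mem_ker, hgzero]
  have hAsub : A.toSubmodule = LinearMap.ker g := rfl
  -- A is abelian
  have habA : IsLieAbelian A := by
    constructor
    intro a' b'
    have h1 : ⁅(a' : L), (b' : L)⁆ = 0 := by
      apply hjinj
      rw [brL, (hAmem _).mp a'.2, (hAmem _).mp b'.2, zero_smul, zero_smul, sub_zero,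
        map_zero]
    exact Subtype.ext (by show ⁅(a' : L), (b' : L)⁆ = (0 : L); exact h1)
  -- freeness of A
  obtain ⟨n, bA⟩ := Submodule.basisOfPid b (LinearMap.ker g)
  haveI hAfree : Module.Free ℤ_[p] (LinearMap.ker g) := Module.Free.of_basis bA
  haveI hAfin : Module.Finite ℤ_[p] (LinearMap.ker g) := Module.Finite.of_basis bA
  -- complementarity
  have hinf : Submodule.span ℤ_[p] {x} ⊓ A.toSubmodule = ⊥ := by
    rw [hAsub, Submodule.eq_bot_iff]
    intro z hz
    obtain ⟨hz1, hz2⟩ := Submodule.mem_inf.mp hz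
    obtain ⟨t, rfl⟩ := mem_span_singleton.mp hz1
    rw [LinearMap.mem_ker, map_smul, hgx, smul_eq_mul] at hz2
    rcases mul_eq_zero.mp hz2 with h0 | h0
    · rw [h0, zero_smul]
    · exact absurd h0 hps
  have hsup : Submodule.span ℤ_[p] {x} ⊔ A.toSubmodule = ⊤ := by
    rw [hAsub, Submodule.eq_top_iff']
    intro z
    have hz : g z ∈ LinearMap.range g := LinearMap.mem_range_self g z
    rw [hrange] at hz
    obtain ⟨t, ht⟩ := mem_span_singleton.mp hz
    refine Submodule.mem_sup.mpr ⟨t • x, mem_span_singleton.mpr ⟨t, rfl⟩,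
      z - t • x, ?_, by abel⟩
    rw [LinearMap.mem_ker, map_sub, map_smul, hgx, smul_eq_mul]
    rw [smul_eq_mul] at ht
    rw [ht, sub_self]
  -- the rank of A
  have hrankA : Module.finrank ℤ_[p] (LinearMap.ker g) = d - 1 := by
    have hcompl : IsCompl (Submodule.span ℤ_[p] {x}) (LinearMap.ker g) :=
      ⟨disjoint_iff.mpr (by rw [← hAsub, hinf]), codisjoint_iff.mpr (by rw [← hAsub, hsup])⟩
    have e := Submodule.prodEquivOfIsCompl _ _ hcompl
    have heq : finrank ℤ_[p] (↥(Submodule.span ℤ_[p] {x}) × ↥(LinearMap.ker g)) =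
        finrank ℤ_[p] L := e.finrank_eq
    -- span {x} is free of rank 1
    have hxind : LinearIndependent ℤ_[p] (fun _ : Fin 1 => x) :=
      linearIndependent_unique_iff.mpr hxne
    have hxspan : Submodule.span ℤ_[p] (Set.range (fun _ : Fin 1 => x)) =
        Submodule.span ℤ_[p] {x} := by rw [Set.range_const]
    set bx : Basis (Fin 1) ℤ_[p] (Submodule.span ℤ_[p] {x}) :=
      (Basis.span hxind).map (LinearEquiv.ofEq _ _ hxspan) with hbx
    haveI : Module.Free ℤ_[p] (Submodule.span ℤ_[p] {x}) := Module.Free.of_basis bx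
    haveI : Module.Finite ℤ_[p] (Submodule.span ℤ_[p] {x}) := Module.Finite.of_basis bx
    have h1 : finrank ℤ_[p] (Submodule.span ℤ_[p] {x}) = 1 := by
      rw [finrank_eq_card_basis bx, Fintype.card_fin]
    rw [finrank_prod, h1, hd] at heq
    omega
  refine Or.inr ⟨x, A, s, habA, hAfree, hrankA, hinf, hsup, ?_⟩
  -- the action of x on A
  intro a' ha'
  apply hjinj
  rw [map_smul, brL, (hAmem _).mp ha', zero_smul, sub_zero]
  rw [← algebraMap_smul ℚ_[p] ((p : ℤ_[p]) ^ s) (j a')]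
  congr 1
  rw [← hgcoe, hgx]
  rfl
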